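/- Let Γ be a ℤ^d-periodic graph with an n-vertex fundamental domain W, and suppose the generic Newton polytope N = N(D(z,λ)) of Γ is a vertical segment. If there exists U ⊂ W with |U| = |W| − 1 such that U is a fundamental domain of support 0 of the induced periodic graph Γ_U, then Γ has a fundamental domain of support 0. -/

import Mathlib

open scoped Classical Polynomial

noncomputable section

/-- A `ℤ^d`-periodic graph (with no self-loops or multiple edges), given by a
fundamental domain `[n] = Fin n` together with, for each pair `i j` of vertices
of the fundamental domain, the finite set `edges i j ⊆ ℤ^d` of those `a` such
that there is an edge between the vertex `(i,0)` and the vertex `(j,a)`.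
The full vertex set is `Fin n × ℤ^d`, with `ℤ^d` acting by translation on the
second coordinate. -/
structure PeriodicGraph (d n : ℕ) where
  edges : Fin n → Fin n → Finset (Fin d → ℤ)
  symm : ∀ i j a, a ∈ edges i j ↔ -a ∈ edges j i
  no_loop : ∀ i, (0 : Fin d → ℤ) ∉ edges i i

namespace PeriodicGraph

variable {d n : ℕ}

/-- Vertices of the periodic graph: pairs `(i, a)` with `i` in the fundamental
domain and `a ∈ ℤ^d`. -/
abbrev Vertex (d n : ℕ) := Fin n × (Fin d → ℤ)

/-- Adjacency in the full `ℤ^d`-periodic graph. -/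
def Adj (G : PeriodicGraph d n) (u v : Vertex d n) : Prop :=
  (v.2 - u.2) ∈ G.edges u.1 v.1

/-- The periodic graph is connected. -/
def Connected (G : PeriodicGraph d n) : Prop :=
  ∀ u v : Vertex d n, Relation.ReflTransGen G.Adj u v

/-- Directed edges (up to translation): triples `(i, j, a)` so that there is an
edge from `(i,0)` to `(j,a)`. -/
def DirEdge (G : PeriodicGraph d n) : Type :=
  {x : Fin n × Fin n × (Fin d → ℤ) // x.2.2 ∈ G.edges x.1 x.2.1}

/-- Reversal of a directed edge. -/
def flipEdge (G : PeriodicGraph d n) (x : G.DirEdge) : G.DirEdge :=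
  ⟨(x.1.2.1, x.1.1, -x.1.2.2), (G.symm _ _ _).mp x.2⟩

lemma flipEdge_flipEdge (G : PeriodicGraph d n) (x : G.DirEdge) :
    G.flipEdge (G.flipEdge x) = x := by
  obtain ⟨⟨i, j, a⟩, hx⟩ := x
  simp [flipEdge]
  rfl

/-- The setoid identifying a directed edge with its reversal; an (undirected)
edge label variable `e_{(i,j),a} = e_{(j,i),-a}` corresponds to an equivalence
class. -/
def edgeSetoid (G : PeriodicGraph d n) : Setoid G.DirEdge where
  r x y := y = x ∨ y = G.flipEdge x
  iseqv := by
    constructor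
    · intro x; exact Or.inl rfl
    · rintro x y (rfl | rfl)
      · exact Or.inl rfl
      · right; rw [flipEdge_flipEdge]
    · rintro x y z (rfl | rfl) h
      · exact h
      · rcases h with rfl | rfl
        · exact Or.inr rfl
        · left; rw [flipEdge_flipEdge]

/-- Edge-label variables: unordered edges of the quotient graph. -/
abbrev EdgeVar (G : PeriodicGraph d n) : Type := Quotient G.edgeSetoid

/-- The index type for the variables of the labeling space `ℂ^{V,E}`:
one potential variable `v_i` for each vertex `i` of the fundamental domain,
and one edge-label variable for each (undirected) edge of the quotient. -/
abbrev VarIdx (G : PeriodicGraph d n) : Type := Fin n ⊕ G.EdgeVar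

/-- The labeling space `ℂ^{V,E}`. -/
abbrev Labeling (G : PeriodicGraph d n) : Type := G.VarIdx → ℂ

/-- The edge variable attached to a directed edge. -/
def edgeVar (G : PeriodicGraph d n) (i j : Fin n) (a : Fin d → ℤ)
    (h : a ∈ G.edges i j) : G.VarIdx :=
  Sum.inr (Quotient.mk G.edgeSetoid ⟨(i, j, a), h⟩)

/-- The ring `ℂ[z^{±1}]` of complex Laurent polynomials in `z = (z_1,…,z_d)`. -/
abbrev LaurentC (d : ℕ) : Type := AddMonoidAlgebra ℂ (Fin d → ℤ)

/-- The universal coefficient ring `ℂ[v,e]`: polynomials in the potential and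
edge-label variables. -/
abbrev CoeffRing (G : PeriodicGraph d n) : Type := MvPolynomial G.VarIdx ℂ

/-- Laurent polynomials in `z` with coefficients in `ℂ[v,e]`. -/
abbrev LaurentU (G : PeriodicGraph d n) : Type :=
  AddMonoidAlgebra G.CoeffRing (Fin d → ℤ)

/-- The Floquet matrix `L(z)` at a fixed labeling `x ∈ ℂ^{V,E}`:
`L(z)_{i,j} = δ_{ij} v_i + ∑_{a : (i,j+a) ∈ ℰ} e_{(i,j),a} z^a`. -/
def floquet (G : PeriodicGraph d n) (x : G.Labeling) :
    Matrix (Fin n) (Fin n) (LaurentC d) := fun i j =>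
  (if i = j then AddMonoidAlgebra.single 0 (x (Sum.inl i)) else 0) +
    ∑ a ∈ (G.edges i j).attach,
      AddMonoidAlgebra.single a.1 (x (G.edgeVar i j a.1 a.2))

/-- The universal Floquet matrix `L(z)`, with the potentials and edge labels
treated as indeterminates. -/
def floquetU (G : PeriodicGraph d n) :
    Matrix (Fin n) (Fin n) G.LaurentU := fun i j =>
  (if i = j then AddMonoidAlgebra.single 0 (MvPolynomial.X (Sum.inl i)) else 0) +
    ∑ a ∈ (G.edges i j).attach,
      AddMonoidAlgebra.single a.1 (MvPolynomial.X (G.edgeVar i j a.1 a.2))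

/-- The matrix `L(z) - λ I` at a fixed labeling, as a matrix of polynomials in
`λ` over `ℂ[z^{±1}]`. -/
def dispMat (G : PeriodicGraph d n) (x : G.Labeling) :
    Matrix (Fin n) (Fin n) (Polynomial (LaurentC d)) := fun i j =>
  Polynomial.C (G.floquet x i j) - if i = j then Polynomial.X else 0

/-- The universal matrix `L(z) - λ I`. -/
def dispMatU (G : PeriodicGraph d n) :
    Matrix (Fin n) (Fin n) (Polynomial G.LaurentU) := fun i j =>
  Polynomial.C (G.floquetU i j) - if i = j then Polynomial.X else 0

/-- The dispersion polynomial `D(z,λ) = det (L(z) - λ I)` at a fixed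
labeling, an element of `ℂ[z^{±1}][λ]`. -/
def disp (G : PeriodicGraph d n) (x : G.Labeling) : Polynomial (LaurentC d) :=
  (G.dispMat x).det

/-- The universal dispersion polynomial `D(v,e,z,λ) = det (L(z) - λ I)`,
an element of `ℂ[v,e][z^{±1}][λ]`. -/
def dispU (G : PeriodicGraph d n) : Polynomial G.LaurentU :=
  G.dispMatU.det

/-- `σD(z,λ) = ∏ i, (L(z) - λI)_{i, σ(i)}` at a fixed labeling. -/
def permProd (G : PeriodicGraph d n) (x : G.Labeling) (σ : Equiv.Perm (Fin n)) :
    Polynomial (LaurentC d) :=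
  ∏ i, G.dispMat x i (σ i)

/-- The universal `σD(v,e,z,λ) = ∏ i, (L(z) - λI)_{i, σ(i)}`. -/
def permProdU (G : PeriodicGraph d n) (σ : Equiv.Perm (Fin n)) :
    Polynomial G.LaurentU :=
  ∏ i, G.dispMatU i (σ i)

/-- The support `𝒜(g) ⊆ ℤ^d × ℕ` of `g ∈ ℂ[z^{±1}][λ]`: the set of pairs
`(a, b)` such that the monomial `z^a λ^b` has nonzero coefficient. -/
def suppC (g : Polynomial (LaurentC d)) : Set ((Fin d → ℤ) × ℕ) :=
  {p | (g.coeff p.2).coeff p.1 ≠ 0}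

/-- The generic support `A(f) ⊆ ℤ^d × ℕ` of `f ∈ ℂ[v,e][z^{±1}][λ]`: the set
of `(a,b)` such that the coefficient `c_{a,b}(v,e)` of `z^a λ^b` is a nonzero
polynomial in `(v,e)` (equivalently, such that `(a,b)` is in the support of the
specialization of `f` at a generic labeling). -/
def genSupp {G : PeriodicGraph d n} (f : Polynomial G.LaurentU) :
    Set ((Fin d → ℤ) × ℕ) :=
  {p | (f.coeff p.2).coeff p.1 ≠ 0}

/-- The full support `𝒜(f) ⊆ ℤ^d × ℕ × ℕ^{V,E}` of `f ∈ ℂ[v,e][z^{±1}][λ]`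
as a polynomial in all the variables `z, λ, v, e`: the set of triples
`(r₁, r₂, r₃)` such that the monomial `z^{r₁} λ^{r₂} (v,e)^{r₃}` appears in `f`
with nonzero coefficient. -/
def fullSupp {G : PeriodicGraph d n} (f : Polynomial G.LaurentU) :
    Set ((Fin d → ℤ) × ℕ × (G.VarIdx →₀ ℕ)) :=
  {r | MvPolynomial.coeff r.2.2 ((f.coeff r.2.1).coeff r.1) ≠ 0}

/-- The embedding `ℤ^d × ℕ → ℝ^{d+1}` of exponent vectors. -/
def toPt (p : (Fin d → ℤ) × ℕ) : (Fin d → ℝ) × ℝ :=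
  (fun i => (p.1 i : ℝ), (p.2 : ℝ))

/-- The generic Newton polytope `N(f) ⊆ ℝ^{d+1}` of `f ∈ ℂ[v,e][z^{±1}][λ]`:
the convex hull of the generic support. -/
def newton {G : PeriodicGraph d n} (f : Polynomial G.LaurentU) :
    Set ((Fin d → ℝ) × ℝ) :=
  convexHull ℝ (toPt '' genSupp f)

/-- The pairing `w · p` of a weight `w ∈ ℤ^{d+1}` with an exponent vector
`p ∈ ℤ^d × ℕ`. -/
def dotZ (w : (Fin d → ℤ) × ℤ) (p : (Fin d → ℤ) × ℕ) : ℤ :=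
  (∑ i, w.1 i * p.1 i) + w.2 * (p.2 : ℤ)

/-- The pairing `w · q` of a weight `w ∈ ℤ^{d+1}` with a point `q ∈ ℝ^{d+1}`. -/
def dotR (w : (Fin d → ℤ) × ℤ) (q : (Fin d → ℝ) × ℝ) : ℝ :=
  (∑ i, (w.1 i : ℝ) * q.1 i) + (w.2 : ℝ) * q.2

/-- The face `N(f)_w` of the generic Newton polytope identified by the weight
`w`: the set of points of `N(f)` on which `w · ·` is minimized. -/
def face {G : PeriodicGraph d n} (f : Polynomial G.LaurentU)
    (w : (Fin d → ℤ) × ℤ) : Set ((Fin d → ℝ) × ℝ) :=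
  {q ∈ newton f | ∀ q' ∈ newton f, dotR w q ≤ dotR w q'}

/-- A set in `ℝ^{d+1}` is vertical if it contains two points `(a,b)` and
`(a,c)` with `b ≠ c`. -/
def IsVertical (F : Set ((Fin d → ℝ) × ℝ)) : Prop :=
  ∃ (a : Fin d → ℝ) (b c : ℝ), b ≠ c ∧ (a, b) ∈ F ∧ (a, c) ∈ F

/-- A set in `ℝ^{d+1}` is a vertical segment if it is a (one-dimensional)
segment and is vertical. -/
def IsVerticalSegment (F : Set ((Fin d → ℝ) × ℝ)) : Prop :=
  (∃ p q : (Fin d → ℝ) × ℝ, p ≠ q ∧ F = segment ℝ p q) ∧ IsVertical F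

/-- `U ⊆ [n]` is a component of the fundamental domain: no edge of `Γ` joins
the `ℤ^d`-orbit of `U` to the `ℤ^d`-orbit of its complement. -/
def IsComponent (G : PeriodicGraph d n) (U : Set (Fin n)) : Prop :=
  ∀ i ∈ U, ∀ j, j ∉ U → G.edges i j = ∅

/-- A fundamental domain of `Γ` is determined by shifts `t i ∈ ℤ^d` of the
vertices of the standard fundamental domain (it is `{(i, t i) : i ∈ [n]}`).
`SupportZeroOn G t U` says that the subset `{(i, t i) : i ∈ U}` of that
fundamental domain has support `0`: every edge between the orbits of vertices
of `U` joins `(i, t i)` to `(j, t j)` with shift `a = 0`. -/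
def SupportZeroOn (G : PeriodicGraph d n) (t : Fin n → (Fin d → ℤ))
    (U : Set (Fin n)) : Prop :=
  ∀ i ∈ U, ∀ j ∈ U, ∀ a ∈ G.edges i j, a = t j - t i

/-- `Γ` has a fundamental domain of support `0`. -/
def HasSupportZeroFD (G : PeriodicGraph d n) : Prop :=
  ∃ t : Fin n → (Fin d → ℤ), G.SupportZeroOn t Set.univ

/-- `Γ` has a fundamental domain with a nonempty component of support `0`. -/
def HasSupportZeroComponent (G : PeriodicGraph d n) : Prop :=
  ∃ (t : Fin n → (Fin d → ℤ)) (U : Set (Fin n)),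
    U.Nonempty ∧ G.IsComponent U ∧ G.SupportZeroOn t U

/-- A subset of the labeling space `ℂ^{V,E}` is algebraic if it is the common
zero locus of a family of polynomials in the variables `(v,e)`. -/
def IsAlgebraicSet {ι : Type*} (S : Set (ι → ℂ)) : Prop :=
  ∃ P : Set (MvPolynomial ι ℂ), S = {x | ∀ p ∈ P, MvPolynomial.eval x p = 0}

/-- A property of labelings holds generically if it holds outside some proper
algebraic subset of the labeling space (i.e., on a nonempty Zariski-open set). -/
def Generic {ι : Type*} (P : (ι → ℂ) → Prop) : Prop :=
  ∃ S : Set (ι → ℂ), IsAlgebraicSet S ∧ S ≠ Set.univ ∧ ∀ x ∉ S, P x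

/-- `g ∈ ℂ[z^{±1}][λ]` has a linear factor in `λ`. -/
def HasLinearFactor (g : Polynomial (LaurentC d)) : Prop :=
  ∃ lam : ℂ, (Polynomial.X - Polynomial.C (algebraMap ℂ (LaurentC d) lam)) ∣ g



/-- The dispersion polynomial `D|_U(z,λ) = det (L|_U(z) - λI)` of the induced
periodic operator on the induced subgraph `Γ_U`, for `U ⊆ [n]`, at a fixed
labeling (the Floquet matrix of the induced operator is the corresponding
principal submatrix of `L(z)`). -/
def dispSub (G : PeriodicGraph d n) (x : G.Labeling) (U : Finset (Fin n)) :
    Polynomial (LaurentC d) :=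
  (Matrix.det (fun i j : {i // i ∈ U} =>
    Polynomial.C (G.floquet x i.1 j.1) - if i = j then Polynomial.X else 0))

/-- Restriction of a Laurent polynomial to the monomials satisfying a
predicate. -/
def laurFilter (p : (Fin d → ℤ) → Prop) (g : LaurentC d) : LaurentC d :=
  AddMonoidAlgebra.ofCoeff (show (Fin d → ℤ) →₀ ℂ from Finsupp.filter p (g.coeff : (Fin d → ℤ) →₀ ℂ))

/-- The facial polynomial `g_w` of `g ∈ ℂ[z^{±1}][λ]`: the sum of the terms of
`g` whose exponent vectors minimize `w · ·` over the support of `g`. -/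
def facialC (w : (Fin d → ℤ) × ℤ) (g : Polynomial (LaurentC d)) :
    Polynomial (LaurentC d) :=
  ∑ b ∈ g.support,
    Polynomial.C (laurFilter
      (fun a => ∀ q ∈ suppC g, dotZ w (a, b) ≤ dotZ w q) (g.coeff b)) *
      Polynomial.X ^ b

/-- The monomial `z^a` in `ℂ[z^{±1}]`. -/
def zMon (a : Fin d → ℤ) : LaurentC d := AddMonoidAlgebra.single a 1

/-- The Sylvester matrix of two polynomials `f, g ∈ R[λ]` (with respect to
their natural degrees `s = deg f` and `t = deg g`): a `(t+s) × (t+s)` matrix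
whose first `t` rows are the shifted coefficient sequences of `f` and whose
last `s` rows are the shifted coefficient sequences of `g`. -/
def sylvester {R : Type*} [CommRing R] (f g : Polynomial R) :
    Matrix (Fin (g.natDegree + f.natDegree)) (Fin (g.natDegree + f.natDegree)) R :=
  fun r c =>
    if (r : ℕ) < g.natDegree then
      (if (r : ℕ) ≤ (c : ℕ) then f.coeff ((c : ℕ) - (r : ℕ)) else 0)
    else
      (if ((r : ℕ) - g.natDegree) ≤ (c : ℕ) then
        g.coeff ((c : ℕ) - ((r : ℕ) - g.natDegree)) else 0)

/-- The resultant of two polynomials in `λ`: the determinant of their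
Sylvester matrix. -/
def resultant {R : Type*} [CommRing R] (f g : Polynomial R) : R :=
  (sylvester f g).det

/-- The simplified quotient graph `S(Γ/ℤ^d)`: the finite simple graph on the
fundamental domain `[n]` with an edge between `i ≠ j` whenever some edge of `Γ`
joins the orbits of `i` and `j`. -/
def simpleQuotient (G : PeriodicGraph d n) : SimpleGraph (Fin n) where
  Adj i j := i ≠ j ∧ (G.edges i j).Nonempty
  symm := ⟨by
    rintro i j ⟨hij, a, ha⟩
    exact ⟨hij.symm, ⟨-a, (G.symm i j a).mp ha⟩⟩⟩
  loopless := ⟨fun i h => h.1 rfl⟩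

/-- A property of potentials `(v_1,…,v_n) ∈ ℂ^n` holds generically if it holds
outside a proper algebraic subset of `ℂ^n`. -/
def GenericPot (P : (Fin n → ℂ) → Prop) : Prop :=
  ∃ S : Set (Fin n → ℂ), IsAlgebraicSet S ∧ S ≠ Set.univ ∧ ∀ x ∉ S, P x

end PeriodicGraph


namespace SZExt
open PeriodicGraph AddMonoidAlgebra

variable {d n : ℕ}

/-- Integer dot product on `ℤ^d`. -/
def dotI (w a : Fin d → ℤ) : ℤ := ∑ i, w i * a i

lemma dotI_zero (w : Fin d → ℤ) : dotI w 0 = 0 := by simp [dotI]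

lemma dotI_add (w a b : Fin d → ℤ) : dotI w (a + b) = dotI w a + dotI w b := by
  simp [dotI, mul_add, Finset.sum_add_distrib]

lemma dotI_neg (w a : Fin d → ℤ) : dotI w (-a) = -dotI w a := by
  simp [dotI, ← Finset.sum_neg_distrib]

lemma dotI_self_pos {a : Fin d → ℤ} (ha : a ≠ 0) : 0 < dotI a a := by
  obtain ⟨i, hi⟩ : ∃ i, a i ≠ 0 := by
    by_contra h
    push_neg at h
    exact ha (funext h)
  refine Finset.sum_pos' (fun j _ => mul_self_nonneg _) ⟨i, Finset.mem_univ i, ?_⟩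
  exact mul_self_pos.mpr hi

/-- Evaluation of a Laurent polynomial at the point `z_i = t ^ (w i)`. -/
def evT (w : Fin d → ℤ) (t : ℂ) (ht : t ≠ 0) : LaurentC d →+* ℂ :=
  AddMonoidAlgebra.liftNCRingHom (RingHom.id ℂ)
    { toFun := fun a => t ^ (dotI w a.toAdd)
      map_one' := by
        show t ^ (dotI w (0 : Fin d → ℤ)) = 1
        rw [dotI_zero, zpow_zero]
      map_mul' := fun a b => by
        show t ^ (dotI w (a.toAdd + b.toAdd)) = _
        rw [dotI_add, zpow_add₀ ht] }
    (fun _ _ => Commute.all _ _)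

lemma evT_single (w : Fin d → ℤ) (t : ℂ) (ht : t ≠ 0) (a : Fin d → ℤ) (c : ℂ) :
    evT w t ht (AddMonoidAlgebra.single a c) = c * t ^ (dotI w a) :=
  AddMonoidAlgebra.liftNC_single _ _ _ _

lemma evT_one_apply (w : Fin d → ℤ) (g : LaurentC d) :
    evT w 1 one_ne_zero g = Finsupp.sum g.coeff fun _ c => c := by
  induction g using AddMonoidAlgebra.induction with
  | zero => simp
  | single_add a c f ha hc ih =>
    rw [map_add, ih, AddMonoidAlgebra.coeff_add, Finsupp.sum_add_index (by simp) (by intros; rfl)]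
    rw [evT_single, one_zpow, mul_one, AddMonoidAlgebra.coeff_single, Finsupp.sum_single_index rfl]

/-- Laurent polynomials with (entrywise) nonnegative real coefficients. -/
def NN (g : LaurentC d) : Prop := ∀ a, 0 ≤ (g.coeff a).re ∧ (g.coeff a).im = 0

lemma NN.zero : NN (0 : LaurentC d) := fun a => by simp

lemma NN.one : NN (1 : LaurentC d) := by
  intro a
  rw [AddMonoidAlgebra.one_def, AddMonoidAlgebra.coeff_single]
  rcases eq_or_ne a (0 : Fin d → ℤ) with rfl | h
  · simp [Finsupp.single_eq_same]
  · rw [Finsupp.single_eq_of_ne' (Ne.symm h)]; simp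

lemma NN.single (a : Fin d → ℤ) : NN (AddMonoidAlgebra.single a (1 : ℂ)) := by
  intro b
  rw [AddMonoidAlgebra.coeff_single]
  rcases eq_or_ne b a with rfl | h
  · simp [Finsupp.single_eq_same]
  · rw [Finsupp.single_eq_of_ne' (Ne.symm h)]; simp

lemma NN.add {f g : LaurentC d} (hf : NN f) (hg : NN g) : NN (f + g) := by
  intro a
  have h1 := hf a; have h2 := hg a
  have : (f + g).coeff a = f.coeff a + g.coeff a := by
    rw [AddMonoidAlgebra.coeff_add, Finsupp.add_apply]
  rw [this, Complex.add_re, Complex.add_im, h1.2, h2.2]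
  exact ⟨add_nonneg h1.1 h2.1, add_zero 0⟩

lemma NN.sum {ι : Type*} (s : Finset ι) (f : ι → LaurentC d) (hf : ∀ i ∈ s, NN (f i)) :
    NN (∑ i ∈ s, f i) := by
  classical
  induction s using Finset.induction with
  | empty => simpa using NN.zero
  | insert x s hx ih =>
    rw [Finset.sum_insert hx]
    exact NN.add (hf _ (Finset.mem_insert_self _ _))
      (ih fun i hi => hf i (Finset.mem_insert_of_mem hi))

lemma NN.mul {f g : LaurentC d} (hf : NN f) (hg : NN g) : NN (f * g) := by
  intro x
  rw [AddMonoidAlgebra.coeff_mul]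
  rw [Finsupp.sum]
  constructor
  · rw [Complex.re_sum]
    refine Finset.sum_nonneg fun a _ => ?_
    rw [Finsupp.sum, Complex.re_sum]
    refine Finset.sum_nonneg fun b _ => ?_
    split_ifs
    · rw [Complex.mul_re, (hf a).2, (hg b).2]
      simpa using mul_nonneg (hf a).1 (hg b).1
    · simp
  · rw [Complex.im_sum]
    refine Finset.sum_eq_zero fun a _ => ?_
    rw [Finsupp.sum, Complex.im_sum]
    refine Finset.sum_eq_zero fun b _ => ?_
    split_ifs
    · rw [Complex.mul_im, (hf a).2, (hg b).2]; ring
    · simp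

lemma NN.mul_pos {f g : LaurentC d} (hf : NN f) (hg : NN g) {a b : Fin d → ℤ}
    (ha : 0 < (f.coeff a).re) (hb : 0 < (g.coeff b).re) : 0 < ((f * g).coeff (a + b)).re := by
  rw [AddMonoidAlgebra.coeff_mul, Finsupp.sum, Complex.re_sum]
  have hmem : a ∈ f.coeff.support := by
    rw [Finsupp.mem_support_iff]
    intro h; rw [h] at ha; simp at ha
  refine Finset.sum_pos' (fun i _ => ?_) ⟨a, hmem, ?_⟩
  · rw [Finsupp.sum, Complex.re_sum]
    refine Finset.sum_nonneg fun j _ => ?_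
    split_ifs
    · rw [Complex.mul_re, (hf i).2, (hg j).2]
      simpa using mul_nonneg (hf i).1 (hg j).1
    · simp
  · have hmemb : b ∈ g.coeff.support := by
      rw [Finsupp.mem_support_iff]
      intro h; rw [h] at hb; simp at hb
    rw [Finsupp.sum, Complex.re_sum]
    refine Finset.sum_pos' (fun j _ => ?_) ⟨b, hmemb, ?_⟩
    · split_ifs
      · rw [Complex.mul_re, (hf a).2, (hg j).2]
        simpa using mul_nonneg (hf a).1 (hg j).1
      · simp
    · rw [if_pos rfl, Complex.mul_re, (hf a).2, (hg b).2]
      simpa using _root_.mul_pos ha hb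

end SZExt
namespace SZExt
open PeriodicGraph AddMonoidAlgebra

variable {d n : ℕ}

/-- The all-ones labeling. -/
def x1 (G : PeriodicGraph d n) : G.Labeling := fun _ => 1

/-- `m`-step walks in the periodic graph. -/
def WalkN (G : PeriodicGraph d n) : ℕ → Vertex d n → Vertex d n → Prop
  | 0, u, v => u = v
  | (m+1), u, v => ∃ z, WalkN G m u z ∧ G.Adj z v

lemma adj_symm (G : PeriodicGraph d n) : Symmetric G.Adj := by
  intro u v h
  unfold PeriodicGraph.Adj at *
  have := (G.symm u.1 v.1 (v.2 - u.2)).mp h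
  simpa [neg_sub] using this

lemma adj_shift (G : PeriodicGraph d n) (u v : Vertex d n) (c : Fin d → ℤ)
    (h : G.Adj u v) : G.Adj (u.1, u.2 + c) (v.1, v.2 + c) := by
  unfold PeriodicGraph.Adj at *
  simpa [add_sub_add_right_eq_sub] using h

lemma rtg_shift (G : PeriodicGraph d n) {u v : Vertex d n} (c : Fin d → ℤ)
    (h : Relation.ReflTransGen G.Adj u v) :
    Relation.ReflTransGen G.Adj (u.1, u.2 + c) (v.1, v.2 + c) := by
  induction h with
  | refl => exact Relation.ReflTransGen.refl
  | tail _ hadj ih => exact ih.tail (by simpa using adj_shift G _ _ c hadj)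

lemma rtg_walkN (G : PeriodicGraph d n) {u v : Vertex d n}
    (h : Relation.ReflTransGen G.Adj u v) : ∃ m, WalkN G m u v := by
  induction h with
  | refl => exact ⟨0, rfl⟩
  | tail _ hadj ih =>
    obtain ⟨m, hm⟩ := ih
    exact ⟨m + 1, _, hm, hadj⟩

lemma NN_floquet (G : PeriodicGraph d n) (i j : Fin n) : NN (G.floquet (x1 G) i j) := by
  unfold PeriodicGraph.floquet
  refine NN.add ?_ (NN.sum _ _ fun a _ => ?_)
  · split_ifs
    · exact NN.single 0
    · exact NN.zero
  · exact NN.single a.1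

lemma NN_pow (G : PeriodicGraph d n) (m : ℕ) (i j : Fin n) :
    NN ((G.floquet (x1 G) ^ m) i j) := by
  induction m generalizing i j with
  | zero =>
    rcases eq_or_ne i j with rfl | h
    · rw [pow_zero, Matrix.one_apply_eq]; exact NN.one
    · rw [pow_zero, Matrix.one_apply_ne h]; exact NN.zero
  | succ m ih =>
    rw [pow_succ, Matrix.mul_apply]
    exact NN.sum _ _ fun k _ => NN.mul (ih i k) (NN_floquet G k j)

lemma floquet_entry_pos (G : PeriodicGraph d n) {i j : Fin n} {a : Fin d → ℤ}
    (ha : a ∈ G.edges i j) : 0 < ((G.floquet (x1 G) i j).coeff a).re := by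
  unfold PeriodicGraph.floquet
  set D : LaurentC d := if i = j then AddMonoidAlgebra.single 0 (x1 G (Sum.inl i)) else 0 with hD
  have hDNN : NN D := by
    rw [hD]; split_ifs
    · exact NN.single 0
    · exact NN.zero
  set S : LaurentC d := ∑ b ∈ (G.edges i j).attach,
      AddMonoidAlgebra.single b.1 (x1 G (G.edgeVar i j b.1 b.2)) with hS
  have happ : (D + S).coeff a = D.coeff a + S.coeff a := by
    rw [AddMonoidAlgebra.coeff_add, Finsupp.add_apply]
  rw [happ, Complex.add_re]
  have hSpos : 0 < (S.coeff a).re := by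
    have happ2 : S.coeff a = ∑ b ∈ (G.edges i j).attach,
        (AddMonoidAlgebra.single b.1 (1 : ℂ) : LaurentC d).coeff a := by
      rw [hS, AddMonoidAlgebra.coeff_sum, Finsupp.finset_sum_apply]
      rfl
    rw [happ2, Complex.re_sum]
    refine Finset.sum_pos' (fun b _ => ((NN.single b.1) a).1) ⟨⟨a, ha⟩, Finset.mem_attach _ _, ?_⟩
    simp [Finsupp.single_eq_same]
  have := (hDNN a).1
  linarith

lemma walk_entry_pos (G : PeriodicGraph d n) (m : ℕ) (u v : Vertex d n)
    (h : WalkN G m u v) : 0 < (((G.floquet (x1 G) ^ m) u.1 v.1).coeff (v.2 - u.2)).re := by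
  induction m generalizing v with
  | zero =>
    cases h
    rw [pow_zero, Matrix.one_apply_eq, sub_self]
    rw [AddMonoidAlgebra.one_def, AddMonoidAlgebra.coeff_single, Finsupp.single_eq_same]
    norm_num
  | succ m ih =>
    obtain ⟨z, hw, hadj⟩ := h
    rw [pow_succ, Matrix.mul_apply]
    have hsum : ((∑ k, (G.floquet (x1 G) ^ m) u.1 k * G.floquet (x1 G) k v.1).coeff (v.2 - u.2)).re
        = ∑ k, (((G.floquet (x1 G) ^ m) u.1 k * G.floquet (x1 G) k v.1).coeff (v.2 - u.2)).re := by
      rw [AddMonoidAlgebra.coeff_sum, Finsupp.finset_sum_apply, Complex.re_sum]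
    rw [hsum]
    refine Finset.sum_pos' (fun k _ => ?_) ⟨z.1, Finset.mem_univ _, ?_⟩
    · exact ((NN.mul (NN_pow G m u.1 k) (NN_floquet G k v.1)) _).1
    · have hsplit : v.2 - u.2 = (z.2 - u.2) + (v.2 - z.2) := by ring
      rw [hsplit]
      exact NN.mul_pos (NN_pow G m u.1 z.1) (NN_floquet G z.1 v.1) (ih z hw)
        (floquet_entry_pos G hadj)

lemma trace_pow_pos (G : PeriodicGraph d n) (m : ℕ) (i : Fin n) (s : Fin d → ℤ)
    (h : WalkN G m (i, 0) (i, s)) :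
    0 < (((G.floquet (x1 G) ^ m).trace).coeff s).re := by
  have : (Matrix.trace (G.floquet (x1 G) ^ m)).coeff s
      = ∑ k, ((G.floquet (x1 G) ^ m) k k).coeff s := by
    rw [Matrix.trace, AddMonoidAlgebra.coeff_sum, Finsupp.finset_sum_apply]
    rfl
  rw [Matrix.trace] at this ⊢
  rw [this, Complex.re_sum]
  refine Finset.sum_pos' (fun k _ => ((NN_pow G m k k) s).1) ⟨i, Finset.mem_univ _, ?_⟩
  have := walk_entry_pos G m (i, 0) (i, s) h
  simpa using this

end SZExt
namespace SZExt
open PeriodicGraph AddMonoidAlgebra Polynomial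

variable {d n : ℕ}

/-- The specialization ring hom `ℂ[v,e][z^{±1}] → ℂ[z^{±1}]` at the all-ones labeling. -/
def toL (G : PeriodicGraph d n) : G.LaurentU →+* LaurentC d :=
  AddMonoidAlgebra.liftNCRingHom
    ((AddMonoidAlgebra.singleZeroRingHom).comp (MvPolynomial.eval (x1 G)))
    { toFun := fun a => AddMonoidAlgebra.single a.toAdd 1
      map_one' := rfl
      map_mul' := fun a b => by
        rw [AddMonoidAlgebra.single_mul_single, one_mul]; rfl }
    (fun _ _ => Commute.all _ _)

lemma toL_single (G : PeriodicGraph d n) (a : Fin d → ℤ) (c : G.CoeffRing) :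
    toL G (AddMonoidAlgebra.single a c)
      = AddMonoidAlgebra.single a (MvPolynomial.eval (x1 G) c) := by
  show AddMonoidAlgebra.liftNC _ _ _ = _
  erw [AddMonoidAlgebra.liftNC_single]
  show AddMonoidAlgebra.single 0 (MvPolynomial.eval (x1 G) c)
      * AddMonoidAlgebra.single ((Multiplicative.ofAdd a).toAdd) 1 = _
  rw [AddMonoidAlgebra.single_mul_single, zero_add, mul_one]
  rfl

lemma toL_apply (G : PeriodicGraph d n) (g : G.LaurentU) (b : Fin d → ℤ) :
    (toL G g).coeff b = MvPolynomial.eval (x1 G) (g.coeff b) := by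
  induction g using AddMonoidAlgebra.induction_linear with
  | zero => simp
  | add x y hx hy =>
    rw [map_add, AddMonoidAlgebra.coeff_add, AddMonoidAlgebra.coeff_add, Finsupp.add_apply,
      Finsupp.add_apply, hx, hy, map_add]
  | single a c =>
    rw [toL_single, AddMonoidAlgebra.coeff_single, AddMonoidAlgebra.coeff_single]
    rcases eq_or_ne b a with rfl | hba
    · rw [Finsupp.single_eq_same, Finsupp.single_eq_same]
    · rw [Finsupp.single_eq_of_ne' (Ne.symm hba), Finsupp.single_eq_of_ne' (Ne.symm hba), map_zero]

lemma toL_floquetU (G : PeriodicGraph d n) (i j : Fin n) :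
    toL G (G.floquetU i j) = G.floquet (x1 G) i j := by
  unfold PeriodicGraph.floquetU PeriodicGraph.floquet
  rw [map_add, map_sum]
  congr 1
  · rw [apply_ite (toL G), map_zero, toL_single, MvPolynomial.eval_X]
  · refine Finset.sum_congr rfl fun a _ => ?_
    rw [toL_single, MvPolynomial.eval_X]

set_option maxHeartbeats 1000000 in
lemma disp_eq_map_dispU (G : PeriodicGraph d n) :
    G.disp (x1 G) = (G.dispU).map (toL G) := by
  unfold PeriodicGraph.disp PeriodicGraph.dispU
  have hd : (Polynomial.mapRingHom (toL G)) (G.dispMatU.det)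
      = ((Polynomial.mapRingHom (toL G)).mapMatrix G.dispMatU).det :=
    RingHom.map_det (Polynomial.mapRingHom (toL G)) G.dispMatU
  rw [← Polynomial.coe_mapRingHom, hd]
  congr 1
  funext i j
  show G.dispMat (x1 G) i j = (Polynomial.mapRingHom (toL G)) (G.dispMatU i j)
  rw [Polynomial.coe_mapRingHom]
  unfold PeriodicGraph.dispMatU PeriodicGraph.dispMat
  simp only [Polynomial.map_sub, Polynomial.map_C, Polynomial.map_X, Polynomial.map_zero,
    apply_ite (Polynomial.map (toL G)), toL_floquetU]

lemma dispU_eq_charpoly (G : PeriodicGraph d n) :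
    G.dispU = (-1 : G.LaurentU[X]) ^ n * (G.floquetU).charpoly := by
  unfold PeriodicGraph.dispU
  have hmat : G.dispMatU = -Matrix.charmatrix G.floquetU := by
    funext i j
    unfold PeriodicGraph.dispMatU
    rw [Matrix.neg_apply, Matrix.charmatrix_apply, neg_sub, Matrix.diagonal_apply]
  rw [hmat, Matrix.det_neg, Fintype.card_fin, Matrix.charpoly]

lemma dispU_coeff_n (G : PeriodicGraph d n) :
    ((G.dispU).coeff n).coeff 0 = (-1 : G.CoeffRing) ^ n := by
  have hdeg : (G.floquetU).charpoly.natDegree = n := by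
    rw [Matrix.charpoly_natDegree_eq_dim, Fintype.card_fin]
  have hco : (G.floquetU).charpoly.coeff n = 1 := by
    have h := (Matrix.charpoly_monic (G.floquetU)).coeff_natDegree
    rw [hdeg] at h
    exact h
  have h1 : ((-1 : G.LaurentU[X]) ^ n) = Polynomial.C ((-1 : G.LaurentU) ^ n) := by
    rw [map_pow, map_neg, map_one]
  rw [dispU_eq_charpoly, h1, Polynomial.coeff_C_mul, hco, mul_one]
  have h2 : ((-1 : G.LaurentU)) ^ n
      = AddMonoidAlgebra.singleZeroRingHom ((-1 : G.CoeffRing) ^ n) := by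
    rw [map_pow, map_neg, map_one]
  rw [h2]
  exact Finsupp.single_eq_same

lemma dispU_coeff_n_ne (G : PeriodicGraph d n) : ((G.dispU).coeff n).coeff 0 ≠ 0 := by
  rw [dispU_coeff_n]
  exact pow_ne_zero _ (neg_ne_zero.mpr one_ne_zero)

lemma newton_fst_const (G : PeriodicGraph d n)
    (hvs : IsVerticalSegment (newton G.dispU)) :
    ∀ q ∈ newton G.dispU, ∀ q' ∈ newton G.dispU, q.1 = q'.1 := by
  obtain ⟨⟨P, Q, hPQ, hseg⟩, α, β, γ, hbc, hb, hc⟩ := hvs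
  rw [hseg] at hb hc
  obtain ⟨u, v, hu, hv, huv, heq⟩ := hb
  obtain ⟨u', v', hu', hv', huv', heq'⟩ := hc
  have hPQ1 : P.1 = Q.1 := by
    have hvv : v ≠ v' := by
      intro hvvv
      subst hvvv
      have huu : u = u' := by linarith
      subst huu
      have hαβ : (α, β) = ((α, γ) : (Fin d → ℝ) × ℝ) := by rw [← heq, ← heq']
      exact hbc (congrArg Prod.snd hαβ)
    have h1 : u • P.1 + v • Q.1 = α := by
      have := congrArg Prod.fst heq
      simpa using this
    have h1' : u' • P.1 + v' • Q.1 = α := by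
      have := congrArg Prod.fst heq'
      simpa using this
    funext i
    have e1 : u * P.1 i + v * Q.1 i = α i := congrFun h1 i
    have e1' : u' * P.1 i + v' * Q.1 i = α i := congrFun h1' i
    have key : (v - v') * (Q.1 i - P.1 i) = 0 := by
      linear_combination e1 - e1' + (P.1 i) * (huv' - huv)
    rcases mul_eq_zero.mp key with h | h
    · exact absurd (by linarith) hvv
    · linarith
  intro q hq q' hq'
  rw [hseg] at hq hq'
  have claim : ∀ r ∈ segment ℝ P Q, r.1 = P.1 := by
    rintro r ⟨s, t, hs, ht, hst, hr⟩
    have : (s • P + t • Q).1 = s • P.1 + t • Q.1 := by simp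
    rw [← hr, this, ← hPQ1, ← add_smul, hst, one_smul]
  rw [claim q hq, claim q' hq']

lemma dispU_supp_zero (G : PeriodicGraph d n)
    (hvs : IsVerticalSegment (newton G.dispU)) (b : ℕ) (a : Fin d → ℤ) (ha : a ≠ 0) :
    ((G.dispU).coeff b).coeff a = 0 := by
  by_contra h
  have hmem : (a, b) ∈ genSupp G.dispU := h
  have hmem2 : ((0 : Fin d → ℤ), n) ∈ genSupp G.dispU := dispU_coeff_n_ne G
  have h1 : toPt (a, b) ∈ newton G.dispU :=
    subset_convexHull ℝ _ ⟨(a, b), hmem, rfl⟩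
  have h2 : toPt ((0 : Fin d → ℤ), n) ∈ newton G.dispU :=
    subset_convexHull ℝ _ ⟨((0 : Fin d → ℤ), n), hmem2, rfl⟩
  have h3 := newton_fst_const G hvs _ h1 _ h2
  apply ha
  funext i
  have h4 : ((a i : ℝ)) = ((0 : ℤ) : ℝ) := by
    have := congrFun h3 i
    simpa [toPt] using this
  exact_mod_cast h4

lemma disp_supp_zero (G : PeriodicGraph d n)
    (hvs : IsVerticalSegment (newton G.dispU)) (b : ℕ) (a : Fin d → ℤ) (ha : a ≠ 0) :
    ((G.disp (x1 G)).coeff b).coeff a = 0 := by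
  rw [disp_eq_map_dispU, Polynomial.coeff_map, toL_apply, dispU_supp_zero G hvs b a ha,
    map_zero]

end SZExt
namespace SZExt
open PeriodicGraph AddMonoidAlgebra Polynomial

variable {d n : ℕ}

lemma evT_supp_zero {g : LaurentC d} (hg : ∀ a : Fin d → ℤ, a ≠ 0 → g.coeff a = 0)
    (w : Fin d → ℤ) (t : ℂ) (ht : t ≠ 0) : evT w t ht g = g.coeff 0 := by
  have hsingle : g = AddMonoidAlgebra.single (0 : Fin d → ℤ) (g.coeff 0) := by
    apply AddMonoidAlgebra.coeff_injective
    apply Finsupp.ext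
    intro a
    rw [AddMonoidAlgebra.coeff_single]
    rcases eq_or_ne a 0 with rfl | h
    · rw [Finsupp.single_eq_same]
    · rw [Finsupp.single_eq_of_ne' (Ne.symm h), hg a h]
  conv_lhs => rw [hsingle]
  rw [evT_single, dotI_zero, zpow_zero, mul_one]

lemma evT_floquet_apply (G : PeriodicGraph d n) (w : Fin d → ℤ) (t : ℂ) (ht : t ≠ 0)
    (i j : Fin n) :
    evT w t ht (G.floquet (x1 G) i j)
      = (if i = j then 1 else 0) + ∑ a ∈ G.edges i j, t ^ (dotI w a) := by
  unfold PeriodicGraph.floquet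
  rw [map_add, map_sum]
  congr 1
  · rcases eq_or_ne i j with rfl | h
    · rw [if_pos rfl, if_pos rfl, evT_single, dotI_zero, zpow_zero, mul_one]
      rfl
    · rw [if_neg h, if_neg h, map_zero]
  · rw [← Finset.sum_attach (G.edges i j) (fun a => t ^ (dotI w a))]
    refine Finset.sum_congr rfl fun a _ => ?_
    rw [evT_single]
    show (1 : ℂ) * _ = _
    rw [one_mul]

lemma conj_circle_zpow {t : ℂ} (htabs : ‖t‖ = 1) (k : ℤ) :
    (starRingEnd ℂ) (t ^ k) = t ^ (-k) := by
  have ht : t ≠ 0 := by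
    intro h; rw [h] at htabs; simp at htabs
  have h1 : t * (starRingEnd ℂ) t = 1 := by
    rw [Complex.mul_conj]
    norm_cast
    rw [Complex.normSq_eq_norm_sq, htabs, one_pow]
  have h2 : (starRingEnd ℂ) t = t⁻¹ := inv_eq_of_mul_eq_one_right h1 ▸ rfl
  rw [map_zpow₀, h2, zpow_neg, inv_zpow]

lemma herm (G : PeriodicGraph d n) (w : Fin d → ℤ) (t : ℂ) (htabs : ‖t‖ = 1)
    (ht : t ≠ 0) :
    Matrix.IsHermitian ((evT w t ht).mapMatrix (G.floquet (x1 G))) := by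
  apply Matrix.IsHermitian.ext
  intro i j
  show (starRingEnd ℂ) ((evT w t ht) (G.floquet (x1 G) j i)) = (evT w t ht) (G.floquet (x1 G) i j)
  rw [evT_floquet_apply, evT_floquet_apply, map_add, map_sum]
  congr 1
  · rcases eq_or_ne i j with rfl | h
    · simp
    · rw [if_neg (Ne.symm h), if_neg h, map_zero]
  · rw [← Finset.sum_attach (G.edges j i)
      (fun a => (starRingEnd ℂ) (t ^ (dotI w a))),
      ← Finset.sum_attach (G.edges i j) (fun a => t ^ (dotI w a))]
    refine Finset.sum_bij' (fun a _ => (⟨-a.1, (G.symm j i a.1).mp a.2⟩ : {x // x ∈ G.edges i j}))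
      (fun a _ => (⟨-a.1, (G.symm i j a.1).mp a.2⟩ : {x // x ∈ G.edges j i}))
      (fun a _ => Finset.mem_attach _ _) (fun a _ => Finset.mem_attach _ _)
      (fun a _ => by simp) (fun a _ => by simp) (fun a _ => ?_)
    rw [conj_circle_zpow htabs, ← dotI_neg]

lemma pencil_eq (M : Matrix (Fin n) (Fin n) ℂ) :
    (fun i j => (Polynomial.C (M i j) - if i = j then (Polynomial.X : ℂ[X]) else 0))
      = M.map Polynomial.C - (Polynomial.X : ℂ[X]) • (1 : Matrix (Fin n) (Fin n) ℂ[X]) := by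
  funext i j
  rw [Matrix.sub_apply, Matrix.map_apply, Matrix.smul_apply, Matrix.one_apply]
  rcases eq_or_ne i j with rfl | h
  · rw [if_pos rfl, if_pos rfl, smul_eq_mul, mul_one]
  · rw [if_neg h, if_neg h, smul_eq_mul, mul_zero]

lemma det_pencil_hermitian (M : Matrix (Fin n) (Fin n) ℂ) (hM : M.IsHermitian) :
    Matrix.det (fun i j => (Polynomial.C (M i j) - if i = j then (Polynomial.X : ℂ[X]) else 0))
      = ∏ i, (Polynomial.C ((hM.eigenvalues i : ℝ) : ℂ) - Polynomial.X) := by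
  classical
  set V : Matrix (Fin n) (Fin n) ℂ := (hM.eigenvectorUnitary : Matrix (Fin n) (Fin n) ℂ) with hV
  set D : Matrix (Fin n) (Fin n) ℂ := Matrix.diagonal (RCLike.ofReal ∘ hM.eigenvalues) with hD
  have hspec : M = V * D * star V := hM.spectral_theorem
  have hVsV : V * star V = 1 := Matrix.mem_unitaryGroup_iff.mp (hM.eigenvectorUnitary).2
  rw [pencil_eq]
  have key : M.map Polynomial.C - (Polynomial.X : ℂ[X]) • 1
      = (V.map Polynomial.C) * (D.map Polynomial.C - (Polynomial.X : ℂ[X]) • 1)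
        * ((star V).map Polynomial.C) := by
    rw [Matrix.mul_sub, Matrix.sub_mul]
    congr 1
    · rw [← Matrix.map_mul, ← Matrix.map_mul, ← hspec]
    · rw [Matrix.mul_smul, Matrix.mul_one, Matrix.smul_mul, ← Matrix.map_mul, hVsV,
        Matrix.map_one Polynomial.C Polynomial.C_0 Polynomial.C_1]
  rw [key, Matrix.det_mul, Matrix.det_mul]
  have hu : (V.map Polynomial.C).det * ((star V).map Polynomial.C).det = 1 := by
    rw [← Matrix.det_mul, ← Matrix.map_mul, hVsV,
      Matrix.map_one Polynomial.C Polynomial.C_0 Polynomial.C_1, Matrix.det_one]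
  have hdiag : D.map Polynomial.C - (Polynomial.X : ℂ[X]) • 1
      = Matrix.diagonal (fun i => Polynomial.C ((hM.eigenvalues i : ℝ) : ℂ) - Polynomial.X) := by
    rw [hD, Matrix.diagonal_map Polynomial.C_0, Matrix.smul_one_eq_diagonal,
      Matrix.diagonal_sub]
    rfl
  calc (V.map Polynomial.C).det * (D.map Polynomial.C - (Polynomial.X : ℂ[X]) • 1).det
        * ((star V).map Polynomial.C).det
      = (D.map Polynomial.C - (Polynomial.X : ℂ[X]) • 1).det
        * ((V.map Polynomial.C).det * ((star V).map Polynomial.C).det) := by ring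
    _ = (D.map Polynomial.C - (Polynomial.X : ℂ[X]) • 1).det := by rw [hu, mul_one]
    _ = ∏ i, (Polynomial.C ((hM.eigenvalues i : ℝ) : ℂ) - Polynomial.X) := by
        rw [hdiag, Matrix.det_diagonal]

end SZExt
namespace SZExt
open PeriodicGraph AddMonoidAlgebra Polynomial

variable {d n : ℕ}

lemma prod_pencil_eq_multiset {f g : Fin n → ℂ}
    (h : ∏ i, (Polynomial.C (f i) - Polynomial.X) = ∏ i, (Polynomial.C (g i) - Polynomial.X)) :
    Finset.univ.val.map f = Finset.univ.val.map g := by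
  have hrw : ∀ v : Fin n → ℂ, ∏ i, (Polynomial.C (v i) - Polynomial.X)
      = (-1 : ℂ[X]) ^ n * ∏ i, (Polynomial.X - Polynomial.C (v i)) := by
    intro v
    have : ∀ i : Fin n, Polynomial.C (v i) - Polynomial.X
        = (-1 : ℂ[X]) * (Polynomial.X - Polynomial.C (v i)) := by
      intro i; ring
    rw [Finset.prod_congr rfl fun i _ => this i, Finset.prod_mul_distrib,
      Finset.prod_const, Finset.card_univ, Fintype.card_fin]
  rw [hrw f, hrw g] at h
  have hne : ((-1 : ℂ[X]) ^ n) ≠ 0 := pow_ne_zero _ (neg_ne_zero.mpr one_ne_zero)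
  have h2 : ∏ i, (Polynomial.X - Polynomial.C (f i))
      = ∏ i, (Polynomial.X - Polynomial.C (g i)) := mul_left_cancel₀ hne h
  have hmult : ∀ v : Fin n → ℂ, ∏ i, (Polynomial.X - Polynomial.C (v i))
      = (Multiset.map (fun a => Polynomial.X - Polynomial.C a) (Finset.univ.val.map v)).prod := by
    intro v
    rw [Multiset.map_map]
    rfl
  rw [hmult f, hmult g] at h2
  have := congrArg Polynomial.roots h2
  rwa [Polynomial.roots_multiset_prod_X_sub_C, Polynomial.roots_multiset_prod_X_sub_C] at this

lemma conj_pow_unitary (V D : Matrix (Fin n) (Fin n) ℂ) (hVsV : V * star V = 1)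
    (hsVV : star V * V = 1) (m : ℕ) :
    (V * D * star V) ^ m = V * D ^ m * star V := by
  induction m with
  | zero => rw [pow_zero, pow_zero, Matrix.mul_one, hVsV]
  | succ m ih =>
    rw [pow_succ, ih, pow_succ]
    have hassoc : V * D ^ m * star V * (V * D * star V)
        = V * D ^ m * ((star V * V) * (D * star V)) := by
      simp only [Matrix.mul_assoc]
    rw [hassoc, hsVV, Matrix.one_mul]
    simp only [Matrix.mul_assoc]

lemma trace_pow_hermitian (M : Matrix (Fin n) (Fin n) ℂ) (hM : M.IsHermitian) (m : ℕ) :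
    (M ^ m).trace = ((Finset.univ.val.map
      (fun i => ((hM.eigenvalues i : ℝ) : ℂ))).map (· ^ m)).sum := by
  classical
  set V : Matrix (Fin n) (Fin n) ℂ := (hM.eigenvectorUnitary : Matrix (Fin n) (Fin n) ℂ) with hV
  set v : Fin n → ℂ := RCLike.ofReal ∘ hM.eigenvalues with hv
  have hspec : M = V * Matrix.diagonal v * star V := hM.spectral_theorem
  have hVsV : V * star V = 1 := Matrix.mem_unitaryGroup_iff.mp (hM.eigenvectorUnitary).2
  have hsVV : star V * V = 1 := Matrix.mem_unitaryGroup_iff'.mp (hM.eigenvectorUnitary).2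
  conv_lhs => rw [hspec]
  rw [conj_pow_unitary _ _ hVsV hsVV, Matrix.trace_mul_cycle,
    hsVV, Matrix.one_mul, Matrix.diagonal_pow, Matrix.trace_diagonal]
  rw [Multiset.map_map]
  show ∑ i, (v ^ m) i = _
  have : ∀ i, (v ^ m) i = v i ^ m := fun i => Pi.pow_apply v m i
  rw [Finset.sum_congr rfl fun i _ => this i]
  rfl

lemma map_disp_eq_pencil (G : PeriodicGraph d n) (w : Fin d → ℤ) (t : ℂ) (ht : t ≠ 0) :
    (G.disp (x1 G)).map (evT w t ht)
      = Matrix.det (fun i j => (Polynomial.C ((evT w t ht).mapMatrix (G.floquet (x1 G)) i j)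
          - if i = j then (Polynomial.X : ℂ[X]) else 0)) := by
  unfold PeriodicGraph.disp
  have hd : (Polynomial.mapRingHom (evT w t ht)) ((G.dispMat (x1 G)).det)
      = ((Polynomial.mapRingHom (evT w t ht)).mapMatrix (G.dispMat (x1 G))).det :=
    RingHom.map_det (Polynomial.mapRingHom (evT w t ht)) (G.dispMat (x1 G))
  rw [← Polynomial.coe_mapRingHom, hd]
  congr 1
  funext i j
  show (Polynomial.mapRingHom (evT w t ht)) (G.dispMat (x1 G) i j) = _
  rw [Polynomial.coe_mapRingHom]
  unfold PeriodicGraph.dispMat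
  simp only [Polynomial.map_sub, Polynomial.map_C, Polynomial.map_X, Polynomial.map_zero,
    apply_ite (Polynomial.map (evT w t ht))]
  rfl

lemma map_disp_const (G : PeriodicGraph d n)
    (hvs : IsVerticalSegment (newton G.dispU)) (w : Fin d → ℤ) (t : ℂ) (ht : t ≠ 0) :
    (G.disp (x1 G)).map (evT w t ht) = (G.disp (x1 G)).map (evT w 1 one_ne_zero) := by
  apply Polynomial.ext
  intro b
  rw [Polynomial.coeff_map, Polynomial.coeff_map,
    evT_supp_zero (fun a ha => disp_supp_zero G hvs b a ha) w t ht,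
    evT_supp_zero (fun a ha => disp_supp_zero G hvs b a ha) w 1 one_ne_zero]

lemma trace_pow_const (G : PeriodicGraph d n)
    (hvs : IsVerticalSegment (newton G.dispU)) (w : Fin d → ℤ) (t : ℂ)
    (htabs : ‖t‖ = 1) (ht : t ≠ 0) (m : ℕ) :
    evT w t ht ((G.floquet (x1 G) ^ m).trace)
      = evT w 1 one_ne_zero ((G.floquet (x1 G) ^ m).trace) := by
  have h1 : ‖(1 : ℂ)‖ = 1 := by simp
  have heig := prod_pencil_eq_multiset (f := fun i => (((herm G w t htabs ht).eigenvalues i : ℝ) : ℂ))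
    (g := fun i => (((herm G w 1 h1 one_ne_zero).eigenvalues i : ℝ) : ℂ)) (by
      rw [← det_pencil_hermitian _ (herm G w t htabs ht),
        ← det_pencil_hermitian _ (herm G w 1 h1 one_ne_zero),
        ← map_disp_eq_pencil, ← map_disp_eq_pencil, map_disp_const G hvs w t ht])
  have htr : ∀ (s : ℂ) (hs : s ≠ 0),
      evT w s hs ((G.floquet (x1 G) ^ m).trace)
        = (((evT w s hs).mapMatrix (G.floquet (x1 G))) ^ m).trace := by
    intro s hs
    rw [← map_pow]
    unfold Matrix.trace
    rw [map_sum]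
    rfl
  rw [htr t ht, htr 1 one_ne_zero, trace_pow_hermitian _ (herm G w t htabs ht),
    trace_pow_hermitian _ (herm G w 1 h1 one_ne_zero), heig]

end SZExt
namespace SZExt
open PeriodicGraph AddMonoidAlgebra Polynomial

variable {d n : ℕ}

lemma evT_eq_sum (w : Fin d → ℤ) (t : ℂ) (ht : t ≠ 0) (g : LaurentC d) :
    evT w t ht g = ∑ a ∈ g.coeff.support, g.coeff a * t ^ (dotI w a) := by
  conv_lhs => rw [← AddMonoidAlgebra.sum_coeff_single g]
  rw [map_finsuppSum]
  rw [Finsupp.sum]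
  exact Finset.sum_congr rfl fun a _ => evT_single w t ht a (g.coeff a)

lemma NN_trace_pow (G : PeriodicGraph d n) (m : ℕ) : NN ((G.floquet (x1 G) ^ m).trace) := by
  unfold Matrix.trace
  exact NN.sum _ _ fun i _ => NN_pow G m i i

lemma circle_infinite_roots {P : Polynomial ℂ}
    (h : ∀ t : ℂ, ‖t‖ = 1 → P.IsRoot t) : P = 0 := by
  apply Polynomial.eq_zero_of_infinite_isRoot
  have hIoo : (Set.Ioo (0 : ℝ) 1).Infinite := Set.infinite_coe_iff.mp (Set.Ioo.infinite one_pos)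
  have hinj : Set.InjOn (fun θ : ℝ => Complex.exp (θ * Complex.I)) (Set.Ioo 0 1) := by
    intro θ hθ θ' hθ' heq
    simp only at heq
    obtain ⟨k, hk⟩ := Complex.exp_eq_exp_iff_exists_int.mp heq
    have him := congrArg Complex.im hk
    simp only [Complex.add_im, Complex.mul_im, Complex.mul_re, Complex.ofReal_re, Complex.I_im,
      Complex.ofReal_im, Complex.I_re, Complex.intCast_im, Complex.intCast_re,
      Complex.re_ofNat, Complex.im_ofNat, mul_zero, mul_one, zero_mul, add_zero, zero_add,
      sub_zero] at him
    have hπ3 : (3 : ℝ) < Real.pi := Real.pi_gt_three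
    obtain ⟨h01, h02⟩ := hθ
    obtain ⟨h11, h12⟩ := hθ'
    have hdiff : θ - θ' = (k : ℝ) * (2 * Real.pi) := by linarith
    have hk0 : k = 0 := by
      rcases lt_trichotomy k 0 with h | h | h
      · have h0 : k ≤ -1 := by omega
        have h1 : (k : ℝ) ≤ -1 := by exact_mod_cast h0
        nlinarith
      · exact h
      · have h0 : 1 ≤ k := by omega
        have h1 : (1 : ℝ) ≤ (k : ℝ) := by exact_mod_cast h0
        nlinarith
    rw [hk0] at hdiff
    simp at hdiff
    linarith
  have himg := (hIoo.image hinj)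
  refine himg.mono ?_
  rintro z ⟨θ, _, rfl⟩
  exact h _ (Complex.norm_exp_ofReal_mul_I θ)

lemma closed_walk_zero (G : PeriodicGraph d n)
    (hvs : IsVerticalSegment (newton G.dispU)) {u v : Vertex d n}
    (h : Relation.ReflTransGen G.Adj u v) (hfst : u.1 = v.1) : u.2 = v.2 := by
  by_contra hne
  set s : Fin d → ℤ := v.2 - u.2 with hs
  have hsne : s ≠ 0 := fun h0 => hne (by
    have := sub_eq_zero.mp h0
    exact this.symm)
  -- get a walk from (u.1, 0) to (u.1, s)
  have hw0 : Relation.ReflTransGen G.Adj (u.1, u.2 + (-u.2)) (v.1, v.2 + (-u.2)) :=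
    rtg_shift G (-u.2) h
  rw [add_neg_cancel] at hw0
  have hw1 : Relation.ReflTransGen G.Adj (u.1, 0) (u.1, s) := by
    rw [hs, sub_eq_add_neg]
    rw [← hfst] at hw0
    exact hw0
  obtain ⟨m, hwm⟩ := rtg_walkN G hw1
  set g : LaurentC d := (G.floquet (x1 G) ^ m).trace with hg
  have hNN : NN g := NN_trace_pow G m
  have hpos : 0 < (g.coeff s).re := trace_pow_pos G m u.1 s hwm
  have hssup : s ∈ g.coeff.support := Finsupp.mem_support_iff.mpr (fun h0 => by
    rw [h0] at hpos; simp at hpos)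
  -- the evaluation is constant on the unit circle
  set K : ℂ := evT s 1 one_ne_zero g with hK
  set N : ℕ := g.coeff.support.sup fun a => (dotI s a).natAbs with hN
  have hNle : ∀ a ∈ g.coeff.support, (0 : ℤ) ≤ dotI s a + N := by
    intro a ha
    have h1 : (dotI s a).natAbs ≤ N := Finset.le_sup (f := fun a => (dotI s a).natAbs) ha
    omega
  set P : Polynomial ℂ := (∑ a ∈ g.coeff.support,
      Polynomial.C (g.coeff a) * Polynomial.X ^ (dotI s a + N).toNat)
    - Polynomial.C K * Polynomial.X ^ N with hP
  have hroot : ∀ t : ℂ, ‖t‖ = 1 → P.IsRoot t := by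
    intro t htabs
    have htne : t ≠ 0 := fun h0 => by rw [h0] at htabs; simp at htabs
    have hconst : evT s t htne g = K := trace_pow_const G hvs s t htabs htne m
    show P.eval t = 0
    rw [hP, Polynomial.eval_sub, Polynomial.eval_finset_sum]
    have hterm : ∀ a ∈ g.coeff.support,
        (Polynomial.C (g.coeff a) * Polynomial.X ^ (dotI s a + N).toNat).eval t
          = (g.coeff a * t ^ (dotI s a)) * t ^ N := by
      intro a ha
      rw [Polynomial.eval_mul, Polynomial.eval_C, Polynomial.eval_pow, Polynomial.eval_X]
      have h1 : (t : ℂ) ^ ((dotI s a + N).toNat) = t ^ ((dotI s a + (N : ℤ))) := by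
        rw [← zpow_natCast t ((dotI s a + N).toNat), Int.toNat_of_nonneg (hNle a ha)]
      rw [h1, zpow_add₀ htne, zpow_natCast]
      ring
    rw [Finset.sum_congr rfl hterm, ← Finset.sum_mul, ← evT_eq_sum s t htne g, hconst,
      Polynomial.eval_mul, Polynomial.eval_C, Polynomial.eval_pow, Polynomial.eval_X, sub_self]
  have hP0 : P = 0 := circle_infinite_roots hroot
  -- extract the coefficient of X ^ (dotI s s + N).toNat
  set e₀ : ℕ := (dotI s s + N).toNat with he₀
  have hNlt : N < e₀ := by
    have := dotI_self_pos hsne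
    omega
  have hcoeff : P.coeff e₀ = ∑ a ∈ g.coeff.support,
      (if e₀ = (dotI s a + N).toNat then g.coeff a else 0) := by
    rw [hP, Polynomial.coeff_sub, Polynomial.finset_sum_coeff]
    rw [Polynomial.coeff_C_mul_X_pow, if_neg (by omega : ¬ e₀ = N), sub_zero]
    exact Finset.sum_congr rfl fun a _ => Polynomial.coeff_C_mul_X_pow _ _ _
  have hzero : (0 : ℝ) = ∑ a ∈ g.coeff.support,
      ((if e₀ = (dotI s a + N).toNat then g.coeff a else 0) : ℂ).re := by
    rw [← Complex.re_sum, ← hcoeff, hP0]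
    simp
  have hpossum : 0 < ∑ a ∈ g.coeff.support,
      ((if e₀ = (dotI s a + N).toNat then g.coeff a else 0) : ℂ).re := by
    refine Finset.sum_pos' (fun a _ => ?_) ⟨s, hssup, ?_⟩
    · split_ifs
      · exact (hNN a).1
      · simp
    · rw [if_pos rfl]
      exact hpos
  rw [← hzero] at hpossum
  exact lt_irrefl _ hpossum

end SZExt
namespace SZExt
open PeriodicGraph

variable {d n : ℕ}

/-- Reachability between fundamental-domain vertices in the periodic graph. -/
def Reach (G : PeriodicGraph d n) (i j : Fin n) : Prop :=
  ∃ b : Fin d → ℤ, Relation.ReflTransGen G.Adj (i, 0) (j, b)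

lemma Reach.refl (G : PeriodicGraph d n) (i : Fin n) : Reach G i i :=
  ⟨0, Relation.ReflTransGen.refl⟩

lemma Reach.trans (G : PeriodicGraph d n) {i j k : Fin n}
    (h1 : Reach G i j) (h2 : Reach G j k) : Reach G i k := by
  obtain ⟨b, hb⟩ := h1
  obtain ⟨c, hc⟩ := h2
  have := rtg_shift G b hc
  rw [zero_add] at this
  exact ⟨c + b, hb.trans this⟩

lemma Reach.symm (G : PeriodicGraph d n) {i j : Fin n} (h : Reach G i j) : Reach G j i := by
  obtain ⟨b, hb⟩ := h
  have h1 := (by haveI : Std.Symm G.Adj := ⟨fun _ _ h => adj_symm G h⟩; exact Std.Symm.symm _ _ hb)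
  have h2 := rtg_shift G (-b) h1
  rw [add_neg_cancel] at h2
  exact ⟨0 - b, by simpa [zero_sub, sub_eq_add_neg] using h2⟩

/-- The canonical representative of the component of `i`. -/
noncomputable def rep (G : PeriodicGraph d n) (i : Fin n) : Fin n :=
  (Finset.univ.filter (fun j => Reach G j i)).min' ⟨i, by
    simp [Finset.mem_filter, Reach.refl]⟩

lemma rep_reach (G : PeriodicGraph d n) (i : Fin n) : Reach G (rep G i) i := by
  have := Finset.min'_mem (Finset.univ.filter (fun j => Reach G j i)) ⟨i, by
    simp [Finset.mem_filter, Reach.refl]⟩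
  exact (Finset.mem_filter.mp this).2

lemma rep_eq_of_reach (G : PeriodicGraph d n) {i j : Fin n} (h : Reach G i j) :
    rep G i = rep G j := by
  have hset : (Finset.univ.filter (fun k => Reach G k i))
      = (Finset.univ.filter (fun k => Reach G k j)) := by
    apply Finset.filter_congr
    intro k _
    constructor
    · intro hk; exact Reach.trans G hk h
    · intro hk; exact Reach.trans G hk (Reach.symm G h)
  unfold rep
  congr 1

end SZExt
open PeriodicGraph in
/-- Suppose the generic Newton polytope of `Γ` is a vertical
segment. If some `U ⊆ W` with `|U| = |W| - 1` is a fundamental domain of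
support `0` of the induced periodic graph `Γ_U`, then `Γ` itself has a
fundamental domain of support `0`. -/
theorem supportZero_extension {d n : ℕ} (G : PeriodicGraph d n)
    (hvs : IsVerticalSegment (newton G.dispU))
    (U : Finset (Fin n)) (hcard : U.card = n - 1)
    (hU : G.SupportZeroOn 0 ↑U) :
    G.HasSupportZeroFD := by
  classical
  -- For every vertex `i`, pick a walk from the representative of its component.
  have hrep := fun i : Fin n => SZExt.rep_reach G i
  set t : Fin n → (Fin d → ℤ) := fun i => Classical.choose (hrep i) with ht
  have htw : ∀ i : Fin n,
      Relation.ReflTransGen G.Adj (SZExt.rep G i, 0) (i, t i) :=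
    fun i => Classical.choose_spec (hrep i)
  refine ⟨t, ?_⟩
  intro i _ j _ a ha
  -- `i` and `j` lie in the same component
  have hadj0 : G.Adj (i, (0 : Fin d → ℤ)) (j, a) := by
    show a - 0 ∈ G.edges i j
    simpa using ha
  have hij : SZExt.Reach G i j := ⟨a, Relation.ReflTransGen.single hadj0⟩
  have hrepeq : SZExt.rep G i = SZExt.rep G j := SZExt.rep_eq_of_reach G hij
  -- walk from the representative to `(j, t i + a)` through `(i, t i)`
  have hadj1 : G.Adj (i, t i) (j, t i + a) := by
    show (t i + a) - t i ∈ G.edges i j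
    simpa using ha
  have hw3 : Relation.ReflTransGen G.Adj (SZExt.rep G j, 0) (j, t i + a) := by
    rw [← hrepeq]
    exact (htw i).tail hadj1
  have hw2 : Relation.ReflTransGen G.Adj (SZExt.rep G j, 0) (j, t j) := htw j
  have hcmp : Relation.ReflTransGen G.Adj (j, t j) (j, t i + a) :=
    Relation.ReflTransGen.trans
      (by haveI : Std.Symm G.Adj := ⟨fun _ _ h => SZExt.adj_symm G h⟩; exact Std.Symm.symm _ _ hw2) hw3
  have := SZExt.closed_walk_zero G hvs hcmp rfl
  simp only at this
  rw [this]
  abel
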